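/- Completeness of Lip^{n+1}_q: for all real Banach spaces V₁, V₂, every integer n ≥ 0 and every q ∈ [0,∞), the normed space (Lip^{n+1}_q(V₁,V₂), ‖·‖_{Lip^{n+1}_q(V₁,V₂)}) is complete; i.e., for every sequence (φ_m)_{m∈ℕ} in Lip^{n+1}_q(V₁,V₂) with lim_{m,l→∞} ‖φ_m − φ_l‖_{Lip^{n+1}_q(V₁,V₂)} = 0 there exists φ ∈ Lip^{n+1}_q(V₁,V₂) with lim_{m→∞} ‖φ_m − φ‖_{Lip^{n+1}_q(V₁,V₂)} = 0. -/

import Mathlib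

open Filter
open scoped ENNReal NNReal Topology

/-- The weighted Lipschitz norm `‖φ‖_{Lip^{n+1}_q} = Σ_{i=0}^{n} ‖φ^{(i)}(0)‖ +
sup_{v≠w} ‖φ^{(n)}(v) − φ^{(n)}(w)‖ / ((1+max(‖v‖,‖w‖))^q ‖v−w‖) ∈ [0,∞]`. -/
noncomputable def LipNorm {V₁ V₂ : Type*} [NormedAddCommGroup V₁] [NormedSpace ℝ V₁]
    [NormedAddCommGroup V₂] [NormedSpace ℝ V₂] (n : ℕ) (q : ℝ) (φ : V₁ → V₂) : ℝ≥0∞ :=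
  (∑ i ∈ Finset.range (n + 1), (‖iteratedFDeriv ℝ i φ 0‖₊ : ℝ≥0∞))
    + ⨆ (v : V₁) (w : V₁) (_ : v ≠ w),
        (‖iteratedFDeriv ℝ n φ v - iteratedFDeriv ℝ n φ w‖₊ : ℝ≥0∞) /
          ENNReal.ofReal ((1 + max ‖v‖ ‖w‖) ^ q * ‖v - w‖)

open Metric
section Aux
variable {V₁ V₂ : Type*} [NormedAddCommGroup V₁] [NormedSpace ℝ V₁]
    [NormedAddCommGroup V₂] [NormedSpace ℝ V₂]

lemma denom_pos {q : ℝ} (hq : 0 ≤ q) {v w : V₁} (hvw : v ≠ w) :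
    0 < (1 + max ‖v‖ ‖w‖) ^ q * ‖v - w‖ := by
  have h1 : (0:ℝ) < 1 + max ‖v‖ ‖w‖ := by
    have := norm_nonneg v
    have := le_max_left ‖v‖ ‖w‖
    linarith
  have h2 : (0:ℝ) < ‖v - w‖ := by rwa [norm_pos_iff, sub_ne_zero]
  exact mul_pos (Real.rpow_pos_of_pos h1 q) h2

lemma my_iteratedFDeriv_sub {i : ℕ} {f g : V₁ → V₂} (hf : ContDiff ℝ i f)
    (hg : ContDiff ℝ i g) (x : V₁) :
    iteratedFDeriv ℝ i (f - g) x = iteratedFDeriv ℝ i f x - iteratedFDeriv ℝ i g x := by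
  have h : f - g = f + (-g) := sub_eq_add_neg f g
  have hgneg : ContDiff ℝ (i : ℕ) (-g) := hg.neg
  rw [h, iteratedFDeriv_add_apply (g := -g) hf.contDiffAt hgneg.contDiffAt, iteratedFDeriv_neg_apply, sub_eq_add_neg]

lemma E1_of_lip {n i : ℕ} {q : ℝ} {g : V₁ → V₂} (hi : i ≤ n) :
    (‖iteratedFDeriv ℝ i g 0‖₊ : ℝ≥0∞) ≤ LipNorm n q g := by
  refine le_trans ?_ (le_self_add : _ ≤ LipNorm n q g)
  exact Finset.single_le_sum (f := fun j => (‖iteratedFDeriv ℝ j g 0‖₊ : ℝ≥0∞))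
    (fun j _ => zero_le) (Finset.mem_range.mpr (Nat.lt_succ_of_le hi))

lemma E2_of_lip {n : ℕ} {q : ℝ} (hq : 0 ≤ q) {g : V₁ → V₂} {v w : V₁} (hvw : v ≠ w) :
    (‖iteratedFDeriv ℝ n g v - iteratedFDeriv ℝ n g w‖₊ : ℝ≥0∞) ≤
      LipNorm n q g * ENNReal.ofReal ((1 + max ‖v‖ ‖w‖) ^ q * ‖v - w‖) := by
  have hc0 : ENNReal.ofReal ((1 + max ‖v‖ ‖w‖) ^ q * ‖v - w‖) ≠ 0 := by
    simp only [ne_eq, ENNReal.ofReal_eq_zero, not_le]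
    exact denom_pos hq hvw
  have hctop : ENNReal.ofReal ((1 + max ‖v‖ ‖w‖) ^ q * ‖v - w‖) ≠ ⊤ := ENNReal.ofReal_ne_top
  have hsup : (‖iteratedFDeriv ℝ n g v - iteratedFDeriv ℝ n g w‖₊ : ℝ≥0∞) /
      ENNReal.ofReal ((1 + max ‖v‖ ‖w‖) ^ q * ‖v - w‖) ≤ LipNorm n q g := by
    refine le_trans ?_ (le_add_self : _ ≤ LipNorm n q g)
    exact le_iSup_of_le v (le_iSup_of_le w (le_iSup_of_le hvw le_rfl))
  exact (ENNReal.div_le_iff hc0 hctop).mp hsup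

lemma E1_real {n i : ℕ} {q : ℝ} {g : V₁ → V₂} (hi : i ≤ n) (hfin : LipNorm n q g ≠ ⊤) :
    ‖iteratedFDeriv ℝ i g 0‖ ≤ (LipNorm n q g).toReal := by
  have := ENNReal.toReal_mono hfin (E1_of_lip (q := q) hi)
  simpa using this

lemma E2_real {n : ℕ} {q : ℝ} (hq : 0 ≤ q) {g : V₁ → V₂} (hfin : LipNorm n q g ≠ ⊤)
    (v w : V₁) :
    ‖iteratedFDeriv ℝ n g v - iteratedFDeriv ℝ n g w‖ ≤
      (LipNorm n q g).toReal * ((1 + max ‖v‖ ‖w‖) ^ q * ‖v - w‖) := by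
  rcases eq_or_ne v w with rfl | hvw
  · simp
  · have h := E2_of_lip (n := n) (g := g) hq hvw
    have hne : LipNorm n q g * ENNReal.ofReal ((1 + max ‖v‖ ‖w‖) ^ q * ‖v - w‖) ≠ ⊤ :=
      ENNReal.mul_ne_top hfin ENNReal.ofReal_ne_top
    have := ENNReal.toReal_mono hne h
    rw [ENNReal.toReal_mul, ENNReal.toReal_ofReal (denom_pos hq hvw).le] at this
    simpa using this

lemma lip_le_of_bounds {n : ℕ} {q : ℝ} (hq : 0 ≤ q) {g : V₁ → V₂} {ε : ℝ} (hε : 0 ≤ ε)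
    (h1 : ∀ i ≤ n, ‖iteratedFDeriv ℝ i g 0‖ ≤ ε)
    (h2 : ∀ v w : V₁, ‖iteratedFDeriv ℝ n g v - iteratedFDeriv ℝ n g w‖ ≤
      ε * ((1 + max ‖v‖ ‖w‖) ^ q * ‖v - w‖)) :
    LipNorm n q g ≤ ENNReal.ofReal ((n + 1) * ε + ε) := by
  rw [ENNReal.ofReal_add (by positivity) hε]
  unfold LipNorm
  refine add_le_add ?_ ?_
  · have heq : ∀ j ∈ Finset.range (n+1),
        (‖iteratedFDeriv ℝ j g 0‖₊ : ℝ≥0∞) = ENNReal.ofReal ‖iteratedFDeriv ℝ j g 0‖ := by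
      intro j _
      rw [← enorm_eq_nnnorm, ofReal_norm]
    rw [Finset.sum_congr rfl heq, ← ENNReal.ofReal_sum_of_nonneg (fun j _ => norm_nonneg _)]
    refine ENNReal.ofReal_le_ofReal ?_
    have hb := Finset.sum_le_card_nsmul (Finset.range (n+1))
      (fun j => ‖iteratedFDeriv ℝ j g 0‖) ε
      (fun j hj => h1 j (Nat.lt_succ_iff.mp (Finset.mem_range.mp hj)))
    simpa [Finset.card_range, nsmul_eq_mul] using hb
  · refine iSup_le fun v => iSup_le fun w => iSup_le fun hvw => ?_
    have hc0 : ENNReal.ofReal ((1 + max ‖v‖ ‖w‖) ^ q * ‖v - w‖) ≠ 0 := by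
      simp only [ne_eq, ENNReal.ofReal_eq_zero, not_le]
      exact denom_pos hq hvw
    rw [ENNReal.div_le_iff hc0 ENNReal.ofReal_ne_top, ← ENNReal.ofReal_mul hε,
      ← enorm_eq_nnnorm, ← ofReal_norm]
    exact ENNReal.ofReal_le_ofReal (h2 v w)

lemma lipNorm_sub_le {n : ℕ} {q : ℝ} {f g : V₁ → V₂} (hf : ContDiff ℝ n f)
    (hg : ContDiff ℝ n g) :
    LipNorm n q (f - g) ≤ LipNorm n q f + LipNorm n q g := by
  have hD : ∀ i ≤ n, ∀ x : V₁, iteratedFDeriv ℝ i (f - g) x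
      = iteratedFDeriv ℝ i f x - iteratedFDeriv ℝ i g x := by
    intro i hi x
    exact my_iteratedFDeriv_sub (hf.of_le (by exact_mod_cast hi))
      (hg.of_le (by exact_mod_cast hi)) x
  unfold LipNorm
  rw [add_add_add_comm]
  refine add_le_add ?_ ?_
  · rw [← Finset.sum_add_distrib]
    refine Finset.sum_le_sum fun i hi => ?_
    rw [hD i (Nat.lt_succ_iff.mp (Finset.mem_range.mp hi)) 0]
    calc (‖iteratedFDeriv ℝ i f 0 - iteratedFDeriv ℝ i g 0‖₊ : ℝ≥0∞)
        ≤ ((‖iteratedFDeriv ℝ i f 0‖₊ + ‖iteratedFDeriv ℝ i g 0‖₊ : ℝ≥0) : ℝ≥0∞) :=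
          ENNReal.coe_le_coe.mpr (nnnorm_sub_le _ _)
      _ = _ := ENNReal.coe_add _ _
  · refine iSup_le fun v => iSup_le fun w => iSup_le fun hvw => ?_
    rw [hD n le_rfl v, hD n le_rfl w]
    have heq : iteratedFDeriv ℝ n f v - iteratedFDeriv ℝ n g v
        - (iteratedFDeriv ℝ n f w - iteratedFDeriv ℝ n g w)
        = (iteratedFDeriv ℝ n f v - iteratedFDeriv ℝ n f w)
          - (iteratedFDeriv ℝ n g v - iteratedFDeriv ℝ n g w) := by abel
    rw [heq]
    calc (‖_ - _‖₊ : ℝ≥0∞) / ENNReal.ofReal ((1 + max ‖v‖ ‖w‖) ^ q * ‖v - w‖)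
        ≤ ((‖iteratedFDeriv ℝ n f v - iteratedFDeriv ℝ n f w‖₊ : ℝ≥0∞)
            + (‖iteratedFDeriv ℝ n g v - iteratedFDeriv ℝ n g w‖₊ : ℝ≥0∞))
          / ENNReal.ofReal ((1 + max ‖v‖ ‖w‖) ^ q * ‖v - w‖) := by
          refine ENNReal.div_le_div_right ?_ _
          calc (‖_‖₊ : ℝ≥0∞) ≤ ((‖_‖₊ + ‖_‖₊ : ℝ≥0) : ℝ≥0∞) :=
              ENNReal.coe_le_coe.mpr (nnnorm_sub_le _ _)
            _ = _ := ENNReal.coe_add _ _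
      _ = (‖iteratedFDeriv ℝ n f v - iteratedFDeriv ℝ n f w‖₊ : ℝ≥0∞)
            / ENNReal.ofReal ((1 + max ‖v‖ ‖w‖) ^ q * ‖v - w‖)
          + (‖iteratedFDeriv ℝ n g v - iteratedFDeriv ℝ n g w‖₊ : ℝ≥0∞)
            / ENNReal.ofReal ((1 + max ‖v‖ ‖w‖) ^ q * ‖v - w‖) := ENNReal.add_div
      _ ≤ _ := by
          refine add_le_add ?_ ?_
          · exact le_iSup_of_le v (le_iSup_of_le w (le_iSup_of_le hvw le_rfl))
          · exact le_iSup_of_le v (le_iSup_of_le w (le_iSup_of_le hvw le_rfl))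



variable {V₁ V₂ : Type*} [NormedAddCommGroup V₁] [NormedSpace ℝ V₁]
    [NormedAddCommGroup V₂] [NormedSpace ℝ V₂]

lemma deriv_bound (n : ℕ) (q : ℝ) (hq : 0 ≤ q) (R : ℝ) (hR : 0 ≤ R) (j : ℕ) :
    ∃ C : ℝ, 0 ≤ C ∧ ∀ g : V₁ → V₂, ContDiff ℝ n g → ∀ ε : ℝ, 0 ≤ ε →
      (∀ i ≤ n, ‖iteratedFDeriv ℝ i g 0‖ ≤ ε) →
      (∀ v w : V₁, ‖iteratedFDeriv ℝ n g v - iteratedFDeriv ℝ n g w‖ ≤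
        ε * ((1 + max ‖v‖ ‖w‖) ^ q * ‖v - w‖)) →
      ∀ v : V₁, ‖v‖ ≤ R → ‖iteratedFDeriv ℝ (n - j) g v‖ ≤ C * ε := by
  induction j with
  | zero =>
    refine ⟨1 + (1 + R) ^ q * R, by positivity, ?_⟩
    intro g hg ε hε h1 h2 v hv
    have hkey : ‖iteratedFDeriv ℝ n g v‖ ≤
        ‖iteratedFDeriv ℝ n g 0‖ + ‖iteratedFDeriv ℝ n g v - iteratedFDeriv ℝ n g 0‖ := by
      simpa using norm_add_le (iteratedFDeriv ℝ n g 0)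
        (iteratedFDeriv ℝ n g v - iteratedFDeriv ℝ n g 0)
    have h20 := h2 v 0
    rw [norm_zero, sub_zero, max_eq_left (norm_nonneg v)] at h20
    have hrpow : (1 + ‖v‖) ^ q ≤ (1 + R) ^ q :=
      Real.rpow_le_rpow (by positivity) (by linarith) hq
    have hmul : (1 + ‖v‖) ^ q * ‖v‖ ≤ (1 + R) ^ q * R := by
      have h0 : (0:ℝ) ≤ (1 + ‖v‖) ^ q := (Real.rpow_pos_of_pos (by positivity) q).le
      exact mul_le_mul hrpow hv (norm_nonneg v) (by positivity)
    have := h1 n le_rfl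
    simp only [Nat.sub_zero]
    calc ‖iteratedFDeriv ℝ n g v‖ ≤ ε + ε * ((1 + R) ^ q * R) := by
          nlinarith [h20, hkey]
      _ = (1 + (1 + R) ^ q * R) * ε := by ring
  | succ j ih =>
    obtain ⟨C, hC, hIH⟩ := ih
    by_cases hjn : n ≤ j
    · refine ⟨C, hC, ?_⟩
      intro g hg ε hε h1 h2 v hv
      have heq : n - (j + 1) = n - j := by omega
      rw [heq]
      exact hIH g hg ε hε h1 h2 v hv
    · push_neg at hjn
      refine ⟨1 + C * R, by positivity, ?_⟩
      intro g hg ε hε h1 h2 v hv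
      set i := n - (j + 1) with hidef
      have hisucc : i + 1 = n - j := by omega
      have hilt : i < n := by omega
      have hdiffi : Differentiable ℝ (iteratedFDeriv ℝ i g) :=
        hg.differentiable_iteratedFDeriv (by exact_mod_cast hilt)
      have hbound : ∀ x ∈ closedBall (0:V₁) R, ‖fderiv ℝ (iteratedFDeriv ℝ i g) x‖ ≤ C * ε := by
        intro x hx
        have hnorm : ‖fderiv ℝ (iteratedFDeriv ℝ i g) x‖ = ‖iteratedFDeriv ℝ (i + 1) g x‖ := by
          rw [fderiv_iteratedFDeriv]
          simp [LinearIsometryEquiv.norm_map]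
        rw [hnorm, hisucc]
        exact hIH g hg ε hε h1 h2 x (mem_closedBall_zero_iff.mp hx)
      have hmv := Convex.norm_image_sub_le_of_norm_fderiv_le
        (fun x _ => (hdiffi x)) hbound (convex_closedBall (0:V₁) R)
        (show (0:V₁) ∈ closedBall (0:V₁) R by simp [hR])
        (mem_closedBall_zero_iff.mpr hv)
      rw [sub_zero] at hmv
      have h10 : ‖iteratedFDeriv ℝ i g 0‖ ≤ ε := h1 i (by omega)
      have hkey : ‖iteratedFDeriv ℝ i g v‖ ≤
          ‖iteratedFDeriv ℝ i g 0‖ + ‖iteratedFDeriv ℝ i g v - iteratedFDeriv ℝ i g 0‖ := by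
        simpa using norm_add_le (iteratedFDeriv ℝ i g 0)
          (iteratedFDeriv ℝ i g v - iteratedFDeriv ℝ i g 0)
      have hCε : C * ε * ‖v‖ ≤ C * ε * R := by
        have : (0:ℝ) ≤ C * ε := mul_nonneg hC hε
        exact mul_le_mul_of_nonneg_left hv this
      calc ‖iteratedFDeriv ℝ i g v‖ ≤ ε + C * ε * R := by nlinarith [hmv, hkey]
        _ = (1 + C * R) * ε := by ring

end Aux

/-- **Completeness of `Lip^{n+1}_q`**: every sequence in
`Lip^{n+1}_q(V₁,V₂) = {φ ∈ Cⁿ : ‖φ‖_{Lip^{n+1}_q} < ∞}` which is Cauchy with respect to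
`‖·‖_{Lip^{n+1}_q}` converges in the `‖·‖_{Lip^{n+1}_q}`-sense to an element of
`Lip^{n+1}_q(V₁,V₂)`. -/
theorem LipNorm_complete {V₁ V₂ : Type*}
    [NormedAddCommGroup V₁] [NormedSpace ℝ V₁] [CompleteSpace V₁]
    [NormedAddCommGroup V₂] [NormedSpace ℝ V₂] [CompleteSpace V₂]
    (n : ℕ) (q : ℝ) (hq : 0 ≤ q)
    (φ : ℕ → V₁ → V₂)
    (hmem : ∀ m : ℕ, ContDiff ℝ n (φ m) ∧ LipNorm n q (φ m) < ⊤)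
    (hcauchy : Tendsto (fun p : ℕ × ℕ => LipNorm n q (φ p.1 - φ p.2)) atTop (𝓝 0)) :
    ∃ ψ : V₁ → V₂, ContDiff ℝ n ψ ∧ LipNorm n q ψ < ⊤ ∧
      Tendsto (fun m : ℕ => LipNorm n q (φ m - ψ)) atTop (𝓝 0) := by
  classical
  have hCn : ∀ m, ContDiff ℝ n (φ m) := fun m => (hmem m).1
  have hCi : ∀ (m : ℕ) (i : ℕ), i ≤ n → ContDiff ℝ i (φ m) :=
    fun m i hi => (hCn m).of_le (by exact_mod_cast hi)
  have hsubC : ∀ m l : ℕ, ContDiff ℝ n (φ m - φ l) := fun m l => (hCn m).sub (hCn l)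
  have hfin : ∀ m l : ℕ, LipNorm n q (φ m - φ l) ≠ ⊤ := fun m l =>
    ne_top_of_le_ne_top
      (ENNReal.add_ne_top.mpr ⟨(hmem m).2.ne, (hmem l).2.ne⟩)
      (lipNorm_sub_le (hCn m) (hCn l))
  have hsubD : ∀ (m l : ℕ) (i : ℕ), i ≤ n → ∀ x : V₁,
      iteratedFDeriv ℝ i (φ m - φ l) x
        = iteratedFDeriv ℝ i (φ m) x - iteratedFDeriv ℝ i (φ l) x :=
    fun m l i hi x => my_iteratedFDeriv_sub (hCi m i hi) (hCi l i hi) x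
  -- smallness of the Cauchy differences
  have hsmall : ∀ δ : ℝ, 0 < δ → ∃ N : ℕ, ∀ m, N ≤ m → ∀ l, N ≤ l →
      (LipNorm n q (φ m - φ l)).toReal ≤ δ := by
    intro δ hδ
    have h := ENNReal.tendsto_nhds_zero.mp hcauchy (ENNReal.ofReal δ)
      (ENNReal.ofReal_pos.mpr hδ)
    rw [eventually_atTop] at h
    obtain ⟨P, hP⟩ := h
    refine ⟨max P.1 P.2, fun m hm l hl => ?_⟩
    have hle : P ≤ (m, l) :=
      ⟨le_trans (le_max_left _ _) hm, le_trans (le_max_right _ _) hl⟩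
    exact ENNReal.toReal_le_of_le_ofReal hδ.le (hP (m, l) hle)
  -- uniform bounds on closed balls
  have hball : ∀ (i : ℕ), i ≤ n → ∀ R : ℝ, 0 ≤ R → ∃ C : ℝ, 0 ≤ C ∧
      ∀ m l : ℕ, ∀ v : V₁, ‖v‖ ≤ R →
        ‖iteratedFDeriv ℝ i (φ m) v - iteratedFDeriv ℝ i (φ l) v‖ ≤
          C * (LipNorm n q (φ m - φ l)).toReal := by
    intro i hi R hR
    obtain ⟨C, hC, hb⟩ := deriv_bound (V₁ := V₁) (V₂ := V₂) n q hq R hR (n - i)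
    refine ⟨C, hC, fun m l v hv => ?_⟩
    have h1 : ∀ k, k ≤ n → ‖iteratedFDeriv ℝ k (φ m - φ l) 0‖
        ≤ (LipNorm n q (φ m - φ l)).toReal := fun k hk => E1_real hk (hfin m l)
    have h2 := E2_real (n := n) (g := φ m - φ l) hq (hfin m l)
    have hres := hb (φ m - φ l) (hsubC m l) _ ENNReal.toReal_nonneg h1 h2 v hv
    rw [show n - (n - i) = i by omega] at hres
    rwa [hsubD m l i hi v] at hres
  have harith : ∀ C δ t : ℝ, 0 ≤ C → 0 < δ → t ≤ δ / (2 * (C + 1)) → C * t < δ := by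
    intro C δ t hC hδ ht
    have h2C : (0:ℝ) < 2 * (C + 1) := by linarith
    have h1 : C * t ≤ C * (δ / (2 * (C + 1))) := mul_le_mul_of_nonneg_left ht hC
    have h3 : C * (δ / (2 * (C + 1))) < δ := by
      rw [mul_div_assoc', div_lt_iff₀ h2C]
      nlinarith
    linarith
  -- pointwise Cauchy
  have hptCauchy : ∀ (i : ℕ), i ≤ n → ∀ v : V₁,
      CauchySeq (fun m => iteratedFDeriv ℝ i (φ m) v) := by
    intro i hi v
    rw [Metric.cauchySeq_iff]
    intro δ hδ
    obtain ⟨C, hC, hb⟩ := hball i hi ‖v‖ (norm_nonneg v)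
    obtain ⟨N, hN⟩ := hsmall (δ / (2 * (C + 1))) (by positivity)
    refine ⟨N, fun m hm l hl => ?_⟩
    rw [dist_eq_norm]
    calc ‖iteratedFDeriv ℝ i (φ m) v - iteratedFDeriv ℝ i (φ l) v‖
        ≤ C * (LipNorm n q (φ m - φ l)).toReal := hb m l v le_rfl
      _ < δ := harith _ _ _ hC hδ (hN m hm l hl)
  set F : ∀ i : ℕ, V₁ → (V₁ [×i]→L[ℝ] V₂) :=
    fun i v => limUnder atTop (fun m => iteratedFDeriv ℝ i (φ m) v) with hFdef
  have hFlim : ∀ i : ℕ, i ≤ n → ∀ v : V₁,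
      Tendsto (fun m => iteratedFDeriv ℝ i (φ m) v) atTop (𝓝 (F i v)) :=
    fun i hi v => (hptCauchy i hi v).tendsto_limUnder
  -- uniform convergence on closed balls
  have hFu : ∀ i : ℕ, i ≤ n → ∀ R : ℝ, 0 ≤ R →
      TendstoUniformlyOn (fun m v => iteratedFDeriv ℝ i (φ m) v) (F i) atTop
        (closedBall (0:V₁) R) := by
    intro i hi R hR
    refine UniformCauchySeqOn.tendstoUniformlyOn_of_tendsto ?_ (fun v _ => hFlim i hi v)
    rw [Metric.uniformCauchySeqOn_iff]
    intro δ hδ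
    obtain ⟨C, hC, hb⟩ := hball i hi R hR
    obtain ⟨N, hN⟩ := hsmall (δ / (2 * (C + 1))) (by positivity)
    refine ⟨N, fun m hm l hl x hx => ?_⟩
    rw [dist_eq_norm]
    calc ‖iteratedFDeriv ℝ i (φ m) x - iteratedFDeriv ℝ i (φ l) x‖
        ≤ C * (LipNorm n q (φ m - φ l)).toReal := hb m l x (mem_closedBall_zero_iff.mp hx)
      _ < δ := harith _ _ _ hC hδ (hN m hm l hl)
  -- the limit function
  set e0 := continuousMultilinearCurryFin0 ℝ V₁ V₂ with he0
  set ψ : V₁ → V₂ := fun v => e0 (F 0 v) with hψdef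
  have hD0 : iteratedFDeriv ℝ 0 ψ = F 0 := by
    funext v
    rw [iteratedFDeriv_zero_eq_comp]
    simp only [Function.comp_apply, hψdef]
    exact e0.symm_apply_apply _
  -- derivative step
  have hstep : ∀ i : ℕ, i + 1 ≤ n → ∀ x : V₁,
      HasFDerivAt (F i)
        ((continuousMultilinearCurryLeftEquiv ℝ (fun _ : Fin (i+1) => V₁) V₂)
          (F (i+1) x)) x := by
    intro i hi x
    have hxball : x ∈ ball (0:V₁) (‖x‖ + 1) := by
      rw [mem_ball_zero_iff]; linarith
    refine hasFDerivAt_of_tendstoUniformlyOn (l := atTop) (isOpen_ball)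
      (f := fun m v => iteratedFDeriv ℝ i (φ m) v)
      (f' := fun m v => (continuousMultilinearCurryLeftEquiv ℝ (fun _ : Fin (i+1) => V₁) V₂)
        (iteratedFDeriv ℝ (i+1) (φ m) v))
      (g' := fun v => (continuousMultilinearCurryLeftEquiv ℝ (fun _ : Fin (i+1) => V₁) V₂)
        (F (i+1) v)) ?_ ?_ ?_ hxball
    · rw [Metric.tendstoUniformlyOn_iff]
      intro δ hδ
      have hu := hFu (i+1) hi (‖x‖+1) (by positivity)
      rw [Metric.tendstoUniformlyOn_iff] at hu
      filter_upwards [hu δ hδ] with m hm v hv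
      have hv' : v ∈ closedBall (0:V₁) (‖x‖+1) := ball_subset_closedBall hv
      have hd := hm v hv'
      rw [LinearIsometryEquiv.dist_map]
      exact hd
    · intro m v hv
      have hd : DifferentiableAt ℝ (iteratedFDeriv ℝ i (φ m)) v :=
        ((hCn m).differentiable_iteratedFDeriv
          (by exact_mod_cast (show i < n by omega))) v
      have hh := hd.hasFDerivAt
      have hfd : fderiv ℝ (iteratedFDeriv ℝ i (φ m)) v
          = (continuousMultilinearCurryLeftEquiv ℝ (fun _ : Fin (i+1) => V₁) V₂)
            (iteratedFDeriv ℝ (i+1) (φ m) v) := by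
        rw [fderiv_iteratedFDeriv]
        rfl
      rwa [hfd] at hh
    · intro v hv; exact hFlim i (by omega) v
  -- iterated derivatives of ψ
  have hiter : ∀ i : ℕ, i ≤ n → iteratedFDeriv ℝ i ψ = F i := by
    intro i
    induction i with
    | zero => intro _; exact hD0
    | succ i ih =>
      intro hi
      have hFi : iteratedFDeriv ℝ i ψ = F i := ih (by omega)
      funext x
      have hd := hstep i hi x
      rw [← hFi] at hd
      have hrw : iteratedFDeriv ℝ (i+1) ψ x
          = (continuousMultilinearCurryLeftEquiv ℝ (fun _ : Fin (i+1) => V₁) V₂).symm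
            (fderiv ℝ (iteratedFDeriv ℝ i ψ) x) := by
        rw [iteratedFDeriv_succ_eq_comp_left]; rfl
      rw [hrw, hd.fderiv]
      exact (continuousMultilinearCurryLeftEquiv ℝ (fun _ : Fin (i+1) => V₁) V₂).symm_apply_apply _
  have hdiffψ : ∀ i : ℕ, i < n → Differentiable ℝ (iteratedFDeriv ℝ i ψ) := by
    intro i hi
    rw [hiter i hi.le]
    exact fun x => (hstep i hi x).differentiableAt
  have hcontψ : ∀ i : ℕ, i ≤ n → Continuous (iteratedFDeriv ℝ i ψ) := by
    intro i hi
    rw [hiter i hi]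
    rw [continuous_iff_continuousAt]
    intro x
    have hu := hFu i hi (‖x‖ + 1) (by positivity)
    have hcont : ContinuousOn (F i) (closedBall (0:V₁) (‖x‖+1)) := by
      refine hu.continuousOn (Frequently.of_forall fun m => ?_)
      exact ((hCn m).continuous_iteratedFDeriv (by exact_mod_cast hi)).continuousOn
    refine hcont.continuousAt ?_
    exact mem_nhds_iff.mpr ⟨ball 0 (‖x‖+1), ball_subset_closedBall, isOpen_ball,
      by rw [mem_ball_zero_iff]; linarith⟩
  have hψC : ContDiff ℝ n ψ := contDiff_nat_iff_continuous_differentiable.mpr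
    ⟨fun m hm => hcontψ m hm, fun m hm => hdiffψ m hm⟩
  -- passing bounds to the limit
  have hCψi : ∀ i : ℕ, i ≤ n → ContDiff ℝ i ψ := fun i hi => hψC.of_le (by exact_mod_cast hi)
  have hsubDψ : ∀ (m : ℕ) (i : ℕ), i ≤ n → ∀ x : V₁,
      iteratedFDeriv ℝ i (φ m - ψ) x
        = iteratedFDeriv ℝ i (φ m) x - iteratedFDeriv ℝ i ψ x :=
    fun m i hi x => my_iteratedFDeriv_sub (hCi m i hi) (hCψi i hi) x
  have hlim_bound : ∀ δ : ℝ, 0 < δ → ∃ N : ℕ, ∀ m, N ≤ m →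
      (∀ i, i ≤ n → ‖iteratedFDeriv ℝ i (φ m - ψ) 0‖ ≤ δ) ∧
      (∀ v w : V₁, ‖iteratedFDeriv ℝ n (φ m - ψ) v - iteratedFDeriv ℝ n (φ m - ψ) w‖ ≤
        δ * ((1 + max ‖v‖ ‖w‖) ^ q * ‖v - w‖)) := by
    intro δ hδ
    obtain ⟨N, hN⟩ := hsmall δ hδ
    refine ⟨N, fun m hm => ⟨?_, ?_⟩⟩
    · intro i hi
      rw [hsubDψ m i hi 0, hiter i hi]
      have hten : Tendsto
          (fun l => ‖iteratedFDeriv ℝ i (φ m) 0 - iteratedFDeriv ℝ i (φ l) 0‖)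
          atTop (𝓝 ‖iteratedFDeriv ℝ i (φ m) 0 - F i 0‖) :=
        (tendsto_const_nhds.sub (hFlim i hi 0)).norm
      refine le_of_tendsto hten ?_
      filter_upwards [eventually_ge_atTop N] with l hl
      have h := E1_real hi (hfin m l)
      rw [hsubD m l i hi 0] at h
      exact le_trans h (hN m hm l hl)
    · intro v w
      rw [hsubDψ m n le_rfl v, hsubDψ m n le_rfl w, hiter n le_rfl]
      have hten : Tendsto
          (fun l => ‖(iteratedFDeriv ℝ n (φ m) v - iteratedFDeriv ℝ n (φ l) v)
            - (iteratedFDeriv ℝ n (φ m) w - iteratedFDeriv ℝ n (φ l) w)‖)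
          atTop (𝓝 ‖(iteratedFDeriv ℝ n (φ m) v - F n v)
            - (iteratedFDeriv ℝ n (φ m) w - F n w)‖) :=
        ((tendsto_const_nhds.sub (hFlim n le_rfl v)).sub
          (tendsto_const_nhds.sub (hFlim n le_rfl w))).norm
      refine le_of_tendsto hten ?_
      filter_upwards [eventually_ge_atTop N] with l hl
      have h := E2_real (n := n) (g := φ m - φ l) hq (hfin m l) v w
      rw [hsubD m l n le_rfl v, hsubD m l n le_rfl w] at h
      refine le_trans h ?_
      have hd : (0:ℝ) ≤ (1 + max ‖v‖ ‖w‖) ^ q * ‖v - w‖ := by positivity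
      exact mul_le_mul_of_nonneg_right (hN m hm l hl) hd
  -- conclusion
  have hsubCψfun : ∀ m : ℕ, ContDiff ℝ n (φ m - ψ) := fun m => (hCn m).sub hψC
  have hconv : Tendsto (fun m => LipNorm n q (φ m - ψ)) atTop (𝓝 0) := by
    rw [ENNReal.tendsto_nhds_zero]
    intro εE hεE
    rcases eq_or_ne εE ⊤ with rfl | hne
    · filter_upwards with m
      exact le_top
    · have hpos : 0 < εE.toReal := ENNReal.toReal_pos hεE.ne' hne
      have hn2 : (0:ℝ) < (n:ℝ) + 2 := by positivity
      set δ := εE.toReal / ((n:ℝ) + 2) with hδdef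
      have hδ : 0 < δ := by positivity
      obtain ⟨N, hN⟩ := hlim_bound δ hδ
      rw [eventually_atTop]
      refine ⟨N, fun m hm => ?_⟩
      obtain ⟨h1, h2⟩ := hN m hm
      refine le_trans (lip_le_of_bounds hq hδ.le h1 h2) ?_
      have heq : ((n:ℝ) + 1) * δ + δ = εE.toReal := by
        rw [hδdef]
        field_simp
        ring
      rw [heq, ENNReal.ofReal_toReal hne]
  have hψfin : LipNorm n q ψ < ⊤ := by
    obtain ⟨N, hN⟩ := hlim_bound 1 one_pos
    obtain ⟨h1, h2⟩ := hN N le_rfl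
    have hfinψN : LipNorm n q (φ N - ψ) ≤ ENNReal.ofReal (((n:ℝ) + 1) * 1 + 1) :=
      lip_le_of_bounds hq one_pos.le h1 h2
    have hsub : LipNorm n q (φ N - (φ N - ψ))
        ≤ LipNorm n q (φ N) + LipNorm n q (φ N - ψ) :=
      lipNorm_sub_le (hCn N) (hsubCψfun N)
    rw [sub_sub_cancel] at hsub
    exact lt_of_le_of_lt hsub (ENNReal.add_lt_top.mpr
      ⟨(hmem N).2, lt_of_le_of_lt hfinψN ENNReal.ofReal_lt_top⟩)
  exact ⟨ψ, hψC, hψfin, hconv⟩
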